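/- arXiv:2209.01547 — 4 statements merged into one kernel-verified Lean document; each statement's English description precedes it below -/
import Mathlib

section
/- Let X = f(ε_X, Z) and Y = g(ε_Y, Z) where (ε_X, ε_Y) is independent of Z and f, g are invertible in their first argument with differentiable inverses. Then X and Y are conditionally independent given Z if and only if ε_X and ε_Y are (marginally) independent. -/
open MeasureTheory ProbabilityTheory Set

section Aux

variable {Ω : Type*} {m' m₁ m₂ m₃ m₄ mΩ : MeasurableSpace Ω} [StandardBorelSpace Ω]

/-- Pull an `m'`-measurable set out of a conditional expectation of an indicator. -/
lemma condexp_indicator_inter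
    (μ : Measure Ω) [IsFiniteMeasure μ] {s u : Set Ω} (hs : MeasurableSet s)
    (hu : MeasurableSet[m'] u) :
    (μ⟦s ∩ u | m'⟧) =ᵐ[μ] u.indicator (μ⟦s | m'⟧) := by
  have h1 : Set.indicator (s ∩ u) (fun _ : Ω => (1 : ℝ)) =
      u.indicator (s.indicator fun _ => (1 : ℝ)) := by
    funext ω
    by_cases hωu : ω ∈ u <;> by_cases hωs : ω ∈ s <;>
      simp [Set.indicator, hωu, hωs, Set.mem_inter_iff]
  rw [h1]
  exact condExp_indicator ((integrable_const (1 : ℝ)).indicator hs) hu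

lemma condIndep_mono {hm' : m' ≤ mΩ}
    {μ : Measure Ω} [IsFiniteMeasure μ] (h : CondIndep m' m₁ m₂ hm' μ)
    (h31 : m₃ ≤ m₁) (h42 : m₄ ≤ m₂) : CondIndep m' m₃ m₄ hm' μ := by
  rw [condIndep_iff_condIndepSets] at h ⊢
  exact condIndepSets_of_condIndepSets_of_le_left
    (condIndepSets_of_condIndepSets_of_le_right h (fun s hs => h42 s hs))
    (fun s hs => h31 s hs)

end Aux

section Aux2

variable {Ω : Type*} {mΩ : MeasurableSpace Ω} [StandardBorelSpace Ω]
  {β γ δ : Type*} [MeasurableSpace β] [MeasurableSpace γ] [MeasurableSpace δ]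

/-- If `X` and `Y` are conditionally independent given `Z`, then the pairs `(X, Z)` and
`(Y, Z)` generate conditionally independent σ-algebras given `Z`. -/
lemma condIndepFun_pair {μ : Measure Ω} [IsProbabilityMeasure μ]
    {Z : Ω → δ} (hZ : Measurable Z) {X : Ω → β} {Y : Ω → γ}
    (hXm : Measurable X) (hYm : Measurable Y)
    (h : CondIndepFun (MeasurableSpace.comap Z inferInstance) hZ.comap_le X Y μ) :
    CondIndep (MeasurableSpace.comap Z inferInstance)
      (MeasurableSpace.comap (fun ω => (X ω, Z ω)) inferInstance)
      (MeasurableSpace.comap (fun ω => (Y ω, Z ω)) inferInstance)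
      hZ.comap_le μ := by
  have hXY := (condIndepFun_iff (MeasurableSpace.comap Z inferInstance) hZ.comap_le
    X Y hXm hYm μ).mp h
  have hgen1 : MeasurableSpace.comap (fun ω => (X ω, Z ω))
      (inferInstance : MeasurableSpace (β × δ)) =
      MeasurableSpace.generateFrom ((preimage fun ω => (X ω, Z ω)) ''
        (image2 (· ×ˢ ·) { s : Set β | MeasurableSet s } { t : Set δ | MeasurableSet t })) := by
    conv_lhs => rw [show (inferInstance : MeasurableSpace (β × δ)) = Prod.instMeasurableSpace
      from rfl, ← generateFrom_prod]
    rw [MeasurableSpace.comap_generateFrom]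
  have hgen2 : MeasurableSpace.comap (fun ω => (Y ω, Z ω))
      (inferInstance : MeasurableSpace (γ × δ)) =
      MeasurableSpace.generateFrom ((preimage fun ω => (Y ω, Z ω)) ''
        (image2 (· ×ˢ ·) { s : Set γ | MeasurableSet s } { t : Set δ | MeasurableSet t })) := by
    conv_lhs => rw [show (inferInstance : MeasurableSpace (γ × δ)) = Prod.instMeasurableSpace
      from rfl, ← generateFrom_prod]
    rw [MeasurableSpace.comap_generateFrom]
  have hpi1 : IsPiSystem ((preimage fun ω => (X ω, Z ω)) ''
      (image2 (· ×ˢ ·) { s : Set β | MeasurableSet s } { t : Set δ | MeasurableSet t })) :=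
    (isPiSystem_prod (α := β) (β := δ)).comap _
  have hpi2 : IsPiSystem ((preimage fun ω => (Y ω, Z ω)) ''
      (image2 (· ×ˢ ·) { s : Set γ | MeasurableSet s } { t : Set δ | MeasurableSet t })) :=
    (isPiSystem_prod (α := γ) (β := δ)).comap _
  have hsets : CondIndepSets (MeasurableSpace.comap Z inferInstance) hZ.comap_le
      ((preimage fun ω => (X ω, Z ω)) ''
        (image2 (· ×ˢ ·) { s : Set β | MeasurableSet s } { t : Set δ | MeasurableSet t }))
      ((preimage fun ω => (Y ω, Z ω)) ''
        (image2 (· ×ˢ ·) { s : Set γ | MeasurableSet s } { t : Set δ | MeasurableSet t })) μ := by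
    have hmeas1 : ∀ s ∈ (preimage fun ω => (X ω, Z ω)) ''
        (image2 (· ×ˢ ·) { s : Set β | MeasurableSet s } { t : Set δ | MeasurableSet t }),
        MeasurableSet[mΩ] s := by
      rintro _ ⟨_, ⟨A, hA, B, hB, rfl⟩, rfl⟩
      rw [Set.mk_preimage_prod]
      exact (hXm hA).inter (hZ hB)
    have hmeas2 : ∀ s ∈ (preimage fun ω => (Y ω, Z ω)) ''
        (image2 (· ×ˢ ·) { s : Set γ | MeasurableSet s } { t : Set δ | MeasurableSet t }),
        MeasurableSet[mΩ] s := by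
      rintro _ ⟨_, ⟨A, hA, B, hB, rfl⟩, rfl⟩
      rw [Set.mk_preimage_prod]
      exact (hYm hA).inter (hZ hB)
    rw [condIndepSets_iff _ hZ.comap_le _ _ hmeas1 hmeas2 μ]
    rintro _ _ ⟨_, ⟨A₁, hA₁, B₁, hB₁, rfl⟩, rfl⟩ ⟨_, ⟨A₂, hA₂, B₂, hB₂, rfl⟩, rfl⟩
    rw [Set.mk_preimage_prod, Set.mk_preimage_prod]
    have hu1 : MeasurableSet[MeasurableSpace.comap Z inferInstance] (Z ⁻¹' B₁) := ⟨B₁, hB₁, rfl⟩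
    have hu2 : MeasurableSet[MeasurableSpace.comap Z inferInstance] (Z ⁻¹' B₂) := ⟨B₂, hB₂, rfl⟩
    have hE1 := condexp_indicator_inter (m' := MeasurableSpace.comap Z inferInstance)
      μ (hXm hA₁) hu1
    have hE2 := condexp_indicator_inter (m' := MeasurableSpace.comap Z inferInstance)
      μ (hYm hA₂) hu2
    have hE3 := condexp_indicator_inter (m' := MeasurableSpace.comap Z inferInstance)
      μ ((hXm hA₁).inter (hYm hA₂)) (hu1.inter hu2)
    have hmul := hXY (X ⁻¹' A₁) (Y ⁻¹' A₂) ⟨A₁, hA₁, rfl⟩ ⟨A₂, hA₂, rfl⟩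
    have hset : (X ⁻¹' A₁ ∩ Z ⁻¹' B₁) ∩ (Y ⁻¹' A₂ ∩ Z ⁻¹' B₂) =
        (X ⁻¹' A₁ ∩ Y ⁻¹' A₂) ∩ (Z ⁻¹' B₁ ∩ Z ⁻¹' B₂) := by
      rw [Set.inter_inter_inter_comm]
    rw [hset]
    filter_upwards [hE1, hE2, hE3, hmul] with ω e1 e2 e3 e4
    rw [e3, Pi.mul_apply, e1, e2]
    by_cases h1 : ω ∈ Z ⁻¹' B₁ <;> by_cases h2 : ω ∈ Z ⁻¹' B₂ <;>
      simp [Set.indicator, h1, h2, e4, Pi.mul_apply]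
  exact Kernel.IndepSets.indep ((hXm.prodMk hZ).comap_le) ((hYm.prodMk hZ).comap_le)
    hpi1 hpi2 hgen1 hgen2 hsets

/-- Conditionally on `Z`, two variables jointly independent of `Z` are conditionally
independent iff they are independent. -/
lemma condIndepFun_iff_indepFun_of_indep {μ : Measure Ω} [IsProbabilityMeasure μ]
    {U : Ω → β} {V : Ω → γ} {Z : Ω → δ} (hU : Measurable U) (hV : Measurable V)
    (hZ : Measurable Z)
    (hind : IndepFun (fun ω => (U ω, V ω)) Z μ) :
    CondIndepFun (MeasurableSpace.comap Z inferInstance) hZ.comap_le U V μ ↔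
      IndepFun U V μ := by
  have hm₁_le : MeasurableSpace.comap (fun ω => (U ω, V ω))
      (inferInstance : MeasurableSpace (β × γ)) ≤ mΩ := (hU.prodMk hV).comap_le
  have hI : ProbabilityTheory.Indep
      (MeasurableSpace.comap (fun ω => (U ω, V ω)) inferInstance)
      (MeasurableSpace.comap Z inferInstance) μ := hind
  -- conditional expectations of indicators of sets in `σ(U, V)` are a.e. constant
  have hconst : ∀ (s : Set Ω),
      MeasurableSet[MeasurableSpace.comap (fun ω => (U ω, V ω)) inferInstance] s →
      (μ⟦s | MeasurableSpace.comap Z inferInstance⟧) =ᵐ[μ] fun _ => (μ s).toReal := by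
    intro s hs
    have hsm : StronglyMeasurable[MeasurableSpace.comap (fun ω => (U ω, V ω)) inferInstance]
        (s.indicator fun _ : Ω => (1 : ℝ)) :=
      StronglyMeasurable.indicator stronglyMeasurable_const hs
    have h := condExp_indep_eq hm₁_le hZ.comap_le hsm hI
    refine h.trans (Filter.EventuallyEq.of_eq ?_)
    funext ω
    exact integral_indicator_one (hm₁_le _ hs)
  have hmem : ∀ (A : Set β) (B : Set γ), MeasurableSet A → MeasurableSet B →
      MeasurableSet[MeasurableSpace.comap (fun ω => (U ω, V ω)) inferInstance]
        (U ⁻¹' A ∩ V ⁻¹' B) := by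
    intro A B hA hB
    exact ⟨A ×ˢ B, hA.prod hB, by rw [Set.mk_preimage_prod]⟩
  have hmemU : ∀ (A : Set β), MeasurableSet A →
      MeasurableSet[MeasurableSpace.comap (fun ω => (U ω, V ω)) inferInstance] (U ⁻¹' A) := by
    intro A hA
    have := hmem A univ hA MeasurableSet.univ
    simpa using this
  have hmemV : ∀ (B : Set γ), MeasurableSet B →
      MeasurableSet[MeasurableSpace.comap (fun ω => (U ω, V ω)) inferInstance] (V ⁻¹' B) := by
    intro B hB
    have := hmem univ B MeasurableSet.univ hB
    simpa using this
  constructor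
  · intro h
    rw [indepFun_iff_measure_inter_preimage_eq_mul]
    intro s t hs ht
    have h4 := (condIndepFun_iff_condExp_inter_preimage_eq_mul hU hV).mp h s t hs ht
    have h1 := hconst _ (hmem s t hs ht)
    have h2 := hconst _ (hmemU s hs)
    have h3 := hconst _ (hmemV t ht)
    have hh : (fun _ : Ω => (μ (U ⁻¹' s ∩ V ⁻¹' t)).toReal) =ᵐ[μ]
        fun _ => (μ (U ⁻¹' s)).toReal * (μ (V ⁻¹' t)).toReal := by
      filter_upwards [h1, h2, h3, h4] with ω e1 e2 e3 e4
      rw [← e1, e4, e2, e3]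
    obtain ⟨ω, hω⟩ := hh.exists
    have htR : (μ (U ⁻¹' s ∩ V ⁻¹' t)).toReal = (μ (U ⁻¹' s) * μ (V ⁻¹' t)).toReal := by
      rw [ENNReal.toReal_mul]; exact hω
    exact (ENNReal.toReal_eq_toReal_iff' (measure_ne_top μ _)
      (ENNReal.mul_ne_top (measure_ne_top μ _) (measure_ne_top μ _))).mp htR
  · intro h
    rw [condIndepFun_iff_condExp_inter_preimage_eq_mul hU hV]
    intro s t hs ht
    have h1 := hconst _ (hmem s t hs ht)
    have h2 := hconst _ (hmemU s hs)
    have h3 := hconst _ (hmemV t ht)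
    have hmul : μ (U ⁻¹' s ∩ V ⁻¹' t) = μ (U ⁻¹' s) * μ (V ⁻¹' t) :=
      (indepFun_iff_measure_inter_preimage_eq_mul.mp h) s t hs ht
    filter_upwards [h1, h2, h3] with ω e1 e2 e3
    rw [e1, e2, e3, hmul, ENNReal.toReal_mul]

end Aux2

/-- With `X = f(ε_X, Z)`, `Y = g(ε_Y, Z)`, `(ε_X, ε_Y) ⟂ Z`, and `f, g`
invertible in their first argument with differentiable inverses (and a smooth strictly
positive joint density), `X ⟂ Y | Z` iff `ε_X ⟂ ε_Y`. -/
theorem lcit_latent_characterization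
    {Ω : Type*} [MeasurableSpace Ω] [StandardBorelSpace Ω] {d : ℕ}
    (P : Measure Ω) [IsProbabilityMeasure P]
    (εX εY : Ω → ℝ) (Z : Ω → (Fin d → ℝ))
    (hεX : Measurable εX) (hεY : Measurable εY) (hZ : Measurable Z)
    (f g : ℝ → (Fin d → ℝ) → ℝ)
    (hf_meas : Measurable fun q : ℝ × (Fin d → ℝ) => f q.1 q.2)
    (hg_meas : Measurable fun q : ℝ × (Fin d → ℝ) => g q.1 q.2)
    (hf_bij : ∀ z, Function.Bijective fun e => f e z)
    (hg_bij : ∀ z, Function.Bijective fun e => g e z)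
    (hf_diff : ∀ z, Differentiable ℝ fun e => f e z)
    (hg_diff : ∀ z, Differentiable ℝ fun e => g e z)
    (hf_inv_diff : ∀ z, Differentiable ℝ (Function.invFun fun e => f e z))
    (hg_inv_diff : ∀ z, Differentiable ℝ (Function.invFun fun e => g e z))
    (hindep : IndepFun (fun ω => (εX ω, εY ω)) Z P)
    (X Y : Ω → ℝ) (hX : ∀ ω, X ω = f (εX ω) (Z ω)) (hY : ∀ ω, Y ω = g (εY ω) (Z ω))
    (p : ℝ × ℝ × (Fin d → ℝ) → ℝ) (hp_pos : ∀ v, 0 < p v) (hp_smooth : Continuous p)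
    (hp : P.map (fun ω => (X ω, Y ω, Z ω)) =
      volume.withDensity fun v => ENNReal.ofReal (p v)) :
    CondIndepFun (MeasurableSpace.comap Z inferInstance) hZ.comap_le X Y P ↔
      IndepFun εX εY P := by
  have hXfun : X = fun ω => f (εX ω) (Z ω) := funext hX
  have hYfun : Y = fun ω => g (εY ω) (Z ω) := funext hY
  have hXm : Measurable X := by
    rw [hXfun]; exact hf_meas.comp (hεX.prodMk hZ)
  have hYm : Measurable Y := by
    rw [hYfun]; exact hg_meas.comp (hεY.prodMk hZ)
  -- comap X ≤ comap (εX, Z)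
  have hcomapX : MeasurableSpace.comap X inferInstance ≤
      MeasurableSpace.comap (fun ω => (εX ω, Z ω)) inferInstance := by
    rintro _ ⟨A, hA, rfl⟩
    refine ⟨(fun q : ℝ × (Fin d → ℝ) => f q.1 q.2) ⁻¹' A, hf_meas hA, ?_⟩
    ext ω
    simp [hX ω]
  have hcomapY : MeasurableSpace.comap Y inferInstance ≤
      MeasurableSpace.comap (fun ω => (εY ω, Z ω)) inferInstance := by
    rintro _ ⟨A, hA, rfl⟩
    refine ⟨(fun q : ℝ × (Fin d → ℝ) => g q.1 q.2) ⁻¹' A, hg_meas hA, ?_⟩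
    ext ω
    simp [hY ω]
  -- comap εX ≤ comap (X, Z), via a measurable embedding
  have key : ∀ (h : ℝ → (Fin d → ℝ) → ℝ), (Measurable fun q : ℝ × (Fin d → ℝ) => h q.1 q.2) →
      (∀ z, Function.Bijective fun e => h e z) →
      ∀ (W ε : Ω → ℝ), (∀ ω, W ω = h (ε ω) (Z ω)) →
      MeasurableSpace.comap ε inferInstance ≤
        MeasurableSpace.comap (fun ω => (W ω, Z ω)) inferInstance := by
    intro h hm hbij W ε hW
    rintro _ ⟨A, hA, rfl⟩
    have hΦm : Measurable (fun q : ℝ × (Fin d → ℝ) => (h q.1 q.2, q.2)) :=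
      hm.prodMk measurable_snd
    have hΦi : Function.Injective (fun q : ℝ × (Fin d → ℝ) => (h q.1 q.2, q.2)) := by
      rintro ⟨e, z⟩ ⟨e', z'⟩ hq
      simp only [Prod.mk.injEq] at hq
      obtain ⟨h1, rfl⟩ := hq
      have he : e = e' := (hbij z).1 h1
      rw [he]
    refine ⟨(fun q : ℝ × (Fin d → ℝ) => (h q.1 q.2, q.2)) '' (A ×ˢ univ),
      (hΦm.measurableEmbedding hΦi).measurableSet_image.mpr (hA.prod MeasurableSet.univ), ?_⟩
    ext ω
    simp only [mem_preimage, mem_image, Set.mem_prod, mem_univ, and_true, Prod.exists,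
      Prod.mk.injEq]
    constructor
    · rintro ⟨e, z, heA, h1, rfl⟩
      rw [hW ω] at h1
      have : e = ε ω := (hbij (Z ω)).1 h1
      rwa [this] at heA
    · intro hε
      exact ⟨ε ω, Z ω, hε, (hW ω).symm, rfl⟩
  have hcomapεX := key f hf_meas hf_bij X εX hX
  have hcomapεY := key g hg_meas hg_bij Y εY hY
  rw [← condIndepFun_iff_indepFun_of_indep hεX hεY hZ hindep]
  constructor
  · intro h
    have hpair := condIndepFun_pair hZ hXm hYm h
    rw [condIndepFun_iff_condIndep]
    exact condIndep_mono hpair hcomapεX hcomapεY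
  · intro h
    have hpair := condIndepFun_pair hZ hεX hεY h
    rw [condIndepFun_iff_condIndep]
    exact condIndep_mono hpair hcomapX hcomapY
end

section
/- Suppose X = f(Z) + E_X and Y = g(Z) + E_Y where E_X, E_Y are jointly independent of Z. Then X ⟂ Y | Z if and only if E_X ⟂ E_Y. (Special case of the latent characterization: additive noise models.) -/
open MeasureTheory ProbabilityTheory
set_option maxHeartbeats 1000000

section Aux

variable {Ω : Type*} {m' m₁ m₂ : MeasurableSpace Ω} {mΩ : MeasurableSpace Ω}

/-- Pull an `m'`-measurable set out of a conditional expectation of an indicator. -/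
lemma condexp_set_inter_indicator
    (μ : Measure Ω) [IsFiniteMeasure μ] {A C : Set Ω}
    (hA : MeasurableSet A) (hC : MeasurableSet[m'] C) :
    (μ⟦A ∩ C | m'⟧) =ᵐ[μ] C.indicator (μ⟦A | m'⟧) := by
  have h1 : Set.indicator (A ∩ C) (fun _ : Ω => (1 : ℝ))
      = C.indicator (Set.indicator A fun _ => (1 : ℝ)) := by
    rw [Set.indicator_indicator, Set.inter_comm]
  rw [h1]
  exact condExp_indicator ((integrable_const (1 : ℝ)).indicator hA) hC

/-- If `m₁` is independent of `m'`, the conditional expectation of an `m₁`-measurable set's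
indicator given `m'` is a.e. constant. -/
lemma condexp_set_const_of_indep
    (hm' : m' ≤ mΩ) (hm₁ : m₁ ≤ mΩ)
    (μ : Measure Ω) [IsFiniteMeasure μ] {S : Set Ω}
    (hS : MeasurableSet[m₁] S) (hind : Indep m₁ m' μ) :
    (μ⟦S | m'⟧) =ᵐ[μ] fun _ => (μ S).toReal := by
  have h := condExp_indep_eq hm₁ hm'
    (stronglyMeasurable_const.indicator hS : StronglyMeasurable[m₁]
      (Set.indicator S fun _ => (1 : ℝ))) hind
  refine h.trans ?_
  have : ∫ x, Set.indicator S (fun _ => (1 : ℝ)) x ∂μ = (μ S).toReal := by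
    exact integral_indicator_one (hm₁ S hS)
  rw [this]

lemma indicator_congr_pt {s : Set Ω} {u v : Ω → ℝ} {ω : Ω} (h : u ω = v ω) :
    s.indicator u ω = s.indicator v ω := by
  unfold Set.indicator
  rw [h]

lemma indicator_inter_mul {C D : Set Ω} (u v : Ω → ℝ) :
    (C ∩ D).indicator (u * v) = C.indicator u * D.indicator v := by
  funext ω
  by_cases hC : ω ∈ C <;> by_cases hD : ω ∈ D <;>
    simp [Set.indicator_apply, hC, hD, Set.mem_inter_iff]

variable [StandardBorelSpace Ω]

/-- Core π-system lemma: a factorization over "rectangles" gives conditional independence of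
the σ-algebras enlarged by `m'`. -/
lemma condIndep_sup_of_rect (hm' : m' ≤ mΩ) (hm₁ : m₁ ≤ mΩ) (hm₂ : m₂ ≤ mΩ)
    (μ : Measure Ω) [IsFiniteMeasure μ]
    (hyp : ∀ A B C D, MeasurableSet[m₁] A → MeasurableSet[m₂] B →
      MeasurableSet[m'] C → MeasurableSet[m'] D →
      (μ⟦(A ∩ C) ∩ (B ∩ D) | m'⟧) =ᵐ[μ] (μ⟦A ∩ C | m'⟧) * (μ⟦B ∩ D | m'⟧)) :
    CondIndep m' (m₁ ⊔ m') (m₂ ⊔ m') hm' μ := by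
  set p : MeasurableSpace Ω → Set (Set Ω) :=
    fun m => {s | ∃ A, MeasurableSet[m] A ∧ ∃ C, MeasurableSet[m'] C ∧ s = A ∩ C} with hp
  have hpi : ∀ m : MeasurableSpace Ω, IsPiSystem (p m) := by
    intro m s hs t ht _
    obtain ⟨A, hA, C, hC, rfl⟩ := hs
    obtain ⟨A', hA', C', hC', rfl⟩ := ht
    exact ⟨A ∩ A', hA.inter hA', C ∩ C', hC.inter hC', Set.inter_inter_inter_comm _ _ _ _⟩
  have hgen : ∀ m : MeasurableSpace Ω, m ⊔ m' = @MeasurableSpace.generateFrom Ω (p m) := by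
    intro m
    refine le_antisymm (sup_le ?_ ?_) (MeasurableSpace.generateFrom_le ?_)
    · intro s hs
      exact MeasurableSpace.measurableSet_generateFrom
        ⟨s, hs, Set.univ, MeasurableSet.univ, (Set.inter_univ s).symm⟩
    · intro s hs
      exact MeasurableSpace.measurableSet_generateFrom
        ⟨Set.univ, MeasurableSet.univ, s, hs, (Set.univ_inter s).symm⟩
    · rintro s ⟨A, hA, C, hC, rfl⟩
      exact ((le_sup_left : m ≤ m ⊔ m') A hA).inter ((le_sup_right : m' ≤ m ⊔ m') C hC)
  have hmeas : ∀ (m : MeasurableSpace Ω), m ≤ mΩ → ∀ s ∈ p m, MeasurableSet[mΩ] s := by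
    rintro m hm s ⟨A, hA, C, hC, rfl⟩
    exact (hm A hA).inter (hm' C hC)
  refine CondIndepSets.condIndep (sup_le hm₁ hm') (sup_le hm₂ hm')
    (hpi m₁) (hpi m₂) (hgen m₁) (hgen m₂) ?_
  rw [condIndepSets_iff _ _ _ _ (hmeas m₁ hm₁) (hmeas m₂ hm₂)]
  rintro s t ⟨A, hA, C, hC, rfl⟩ ⟨B, hB, D, hD, rfl⟩
  exact hyp A B C D hA hB hC hD

/-- Conditional independence is preserved by enlarging both σ-algebras with the
conditioning σ-algebra. -/
lemma CondIndep.sup (hm' : m' ≤ mΩ) (hm₁ : m₁ ≤ mΩ) (hm₂ : m₂ ≤ mΩ)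
    (μ : Measure Ω) [IsFiniteMeasure μ]
    (h : CondIndep m' m₁ m₂ hm' μ) :
    CondIndep m' (m₁ ⊔ m') (m₂ ⊔ m') hm' μ := by
  refine condIndep_sup_of_rect hm' hm₁ hm₂ μ ?_
  intro A B C D hA hB hC hD
  have hAB : (μ⟦A ∩ B | m'⟧) =ᵐ[μ] (μ⟦A | m'⟧) * (μ⟦B | m'⟧) :=
    (condIndep_iff m' m₁ m₂ hm' hm₁ hm₂ μ).mp h A B hA hB
  have e1 : (μ⟦(A ∩ C) ∩ (B ∩ D) | m'⟧) = (μ⟦(A ∩ B) ∩ (C ∩ D) | m'⟧) := by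
    rw [Set.inter_inter_inter_comm]
  have e2 : (μ⟦(A ∩ B) ∩ (C ∩ D) | m'⟧) =ᵐ[μ] (C ∩ D).indicator (μ⟦A ∩ B | m'⟧) :=
    condexp_set_inter_indicator μ ((hm₁ A hA).inter (hm₂ B hB)) (hC.inter hD)
  have e3 : (C ∩ D).indicator (μ⟦A ∩ B | m'⟧)
      =ᵐ[μ] (C ∩ D).indicator ((μ⟦A | m'⟧) * (μ⟦B | m'⟧)) := by
    filter_upwards [hAB] with ω hω
    exact indicator_congr_pt hω
  have e4 : (C ∩ D).indicator ((μ⟦A | m'⟧) * (μ⟦B | m'⟧))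
      = C.indicator (μ⟦A | m'⟧) * D.indicator (μ⟦B | m'⟧) := indicator_inter_mul _ _
  have e5 : C.indicator (μ⟦A | m'⟧) * D.indicator (μ⟦B | m'⟧)
      =ᵐ[μ] (μ⟦A ∩ C | m'⟧) * (μ⟦B ∩ D | m'⟧) :=
    ((condexp_set_inter_indicator μ (hm₁ A hA) hC).symm.mul
      (condexp_set_inter_indicator μ (hm₂ B hB) hD).symm)
  calc (μ⟦(A ∩ C) ∩ (B ∩ D) | m'⟧) = (μ⟦(A ∩ B) ∩ (C ∩ D) | m'⟧) := e1
    _ =ᵐ[μ] (C ∩ D).indicator (μ⟦A ∩ B | m'⟧) := e2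
    _ =ᵐ[μ] (C ∩ D).indicator ((μ⟦A | m'⟧) * (μ⟦B | m'⟧)) := e3
    _ = C.indicator (μ⟦A | m'⟧) * D.indicator (μ⟦B | m'⟧) := e4
    _ =ᵐ[μ] (μ⟦A ∩ C | m'⟧) * (μ⟦B ∩ D | m'⟧) := e5

/-- Mutual independence (of `m₁` and `m₂`, and of `m₁ ⊔ m₂` from `m'`) gives conditional
independence given `m'` of the σ-algebras enlarged by `m'`. -/
lemma condIndep_sup_of_mutual_indep (hm' : m' ≤ mΩ) (hm₁ : m₁ ≤ mΩ) (hm₂ : m₂ ≤ mΩ)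
    (μ : Measure Ω) [IsProbabilityMeasure μ]
    (h12 : Indep m₁ m₂ μ) (h3 : Indep (m₁ ⊔ m₂) m' μ) :
    CondIndep m' (m₁ ⊔ m') (m₂ ⊔ m') hm' μ := by
  have hsup : m₁ ⊔ m₂ ≤ mΩ := sup_le hm₁ hm₂
  refine condIndep_sup_of_rect hm' hm₁ hm₂ μ ?_
  intro A B C D hA hB hC hD
  have hA' : MeasurableSet[m₁ ⊔ m₂] A := (le_sup_left : m₁ ≤ m₁ ⊔ m₂) A hA
  have hB' : MeasurableSet[m₁ ⊔ m₂] B := (le_sup_right : m₂ ≤ m₁ ⊔ m₂) B hB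
  have cAB : (μ⟦A ∩ B | m'⟧) =ᵐ[μ] fun _ => (μ (A ∩ B)).toReal :=
    condexp_set_const_of_indep hm' hsup μ (hA'.inter hB') h3
  have cA : (μ⟦A | m'⟧) =ᵐ[μ] fun _ => (μ A).toReal :=
    condexp_set_const_of_indep hm' hsup μ hA' h3
  have cB : (μ⟦B | m'⟧) =ᵐ[μ] fun _ => (μ B).toReal :=
    condexp_set_const_of_indep hm' hsup μ hB' h3
  have hABmul : μ (A ∩ B) = μ A * μ B := (Indep_iff m₁ m₂ μ).mp h12 A B hA hB
  have e1 : (μ⟦(A ∩ C) ∩ (B ∩ D) | m'⟧) = (μ⟦(A ∩ B) ∩ (C ∩ D) | m'⟧) := by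
    rw [Set.inter_inter_inter_comm]
  have e2 : (μ⟦(A ∩ B) ∩ (C ∩ D) | m'⟧) =ᵐ[μ] (C ∩ D).indicator (μ⟦A ∩ B | m'⟧) :=
    condexp_set_inter_indicator μ ((hm₁ A hA).inter (hm₂ B hB)) (hC.inter hD)
  have e3 : (C ∩ D).indicator (μ⟦A ∩ B | m'⟧)
      =ᵐ[μ] (C ∩ D).indicator ((fun _ => (μ A).toReal) * fun _ => (μ B).toReal) := by
    filter_upwards [cAB] with ω hω
    refine indicator_congr_pt (hω.trans ?_)
    simp [hABmul, ENNReal.toReal_mul]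
  have e5 : C.indicator (fun _ => (μ A).toReal) * D.indicator (fun _ => (μ B).toReal)
      =ᵐ[μ] (μ⟦A ∩ C | m'⟧) * (μ⟦B ∩ D | m'⟧) := by
    have f1 : (μ⟦A ∩ C | m'⟧) =ᵐ[μ] C.indicator (fun _ => (μ A).toReal) := by
      refine (condexp_set_inter_indicator μ (hm₁ A hA) hC).trans ?_
      filter_upwards [cA] with ω hω
      exact indicator_congr_pt hω
    have f2 : (μ⟦B ∩ D | m'⟧) =ᵐ[μ] D.indicator (fun _ => (μ B).toReal) := by
      refine (condexp_set_inter_indicator μ (hm₂ B hB) hD).trans ?_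
      filter_upwards [cB] with ω hω
      exact indicator_congr_pt hω
    exact (f1.symm.mul f2.symm)
  calc (μ⟦(A ∩ C) ∩ (B ∩ D) | m'⟧) = (μ⟦(A ∩ B) ∩ (C ∩ D) | m'⟧) := e1
    _ =ᵐ[μ] (C ∩ D).indicator (μ⟦A ∩ B | m'⟧) := e2
    _ =ᵐ[μ] (C ∩ D).indicator ((fun _ => (μ A).toReal) * fun _ => (μ B).toReal) := e3
    _ = C.indicator (fun _ => (μ A).toReal) * D.indicator (fun _ => (μ B).toReal) :=
        indicator_inter_mul _ _
    _ =ᵐ[μ] (μ⟦A ∩ C | m'⟧) * (μ⟦B ∩ D | m'⟧) := e5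

end Aux

lemma comap_pair_eq_sup {Ω α β : Type*} [mα : MeasurableSpace α] [mβ : MeasurableSpace β]
    (f : Ω → α) (g : Ω → β) :
    MeasurableSpace.comap (fun ω => (f ω, g ω)) inferInstance
      = mα.comap f ⊔ mβ.comap g := by
  show MeasurableSpace.comap (fun ω => (f ω, g ω)) (mα.comap Prod.fst ⊔ mβ.comap Prod.snd) = _
  rw [MeasurableSpace.comap_sup, MeasurableSpace.comap_comp, MeasurableSpace.comap_comp]
  rfl
/-- For additive noise models `X = f(Z) + E_X`, `Y = g(Z) + E_Y` with
`(E_X, E_Y)` jointly independent of `Z`, `X ⟂ Y | Z` iff `E_X ⟂ E_Y`. -/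
theorem additive_noise_cond_indep_iff_noise_indep
    {Ω : Type*} [MeasurableSpace Ω] [StandardBorelSpace Ω] {d : ℕ}
    (P : Measure Ω) [IsProbabilityMeasure P]
    (EX EY : Ω → ℝ) (Z : Ω → (Fin d → ℝ))
    (hEX : Measurable EX) (hEY : Measurable EY) (hZ : Measurable Z)
    (f g : (Fin d → ℝ) → ℝ) (hf : Measurable f) (hg : Measurable g)
    (hindep : IndepFun (fun ω => (EX ω, EY ω)) Z P)
    (X Y : Ω → ℝ)
    (hX : ∀ ω, X ω = f (Z ω) + EX ω) (hY : ∀ ω, Y ω = g (Z ω) + EY ω)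
    (p : ℝ × ℝ × (Fin d → ℝ) → ℝ) (hp_pos : ∀ v, 0 < p v) (hp_cont : Continuous p)
    (hp : P.map (fun ω => (X ω, Y ω, Z ω)) =
      volume.withDensity fun v => ENNReal.ofReal (p v)) :
    CondIndepFun (MeasurableSpace.comap Z inferInstance) hZ.comap_le X Y P ↔
      IndepFun EX EY P := by
  have hm' : MeasurableSpace.comap Z inferInstance ≤ ‹MeasurableSpace Ω› := hZ.comap_le
  have hXfun : X = fun ω => f (Z ω) + EX ω := funext hX
  have hYfun : Y = fun ω => g (Z ω) + EY ω := funext hY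
  have hXm : Measurable X := by rw [hXfun]; exact (hf.comp hZ).add hEX
  have hYm : Measurable Y := by rw [hYfun]; exact (hg.comp hZ).add hEY
  have hEXfun : EX = fun ω => X ω - f (Z ω) := funext fun ω => by rw [hX ω]; ring
  have hEYfun : EY = fun ω => Y ω - g (Z ω) := funext fun ω => by rw [hY ω]; ring
  have hIndepSup : Indep (MeasurableSpace.comap EX inferInstance ⊔
      MeasurableSpace.comap EY inferInstance) (MeasurableSpace.comap Z inferInstance) P := by
    rw [← comap_pair_eq_sup EX EY]
    exact (IndepFun_iff_Indep _ _ _).mp hindep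
  constructor
  · intro h
    rw [condIndepFun_iff_condIndep] at h
    have h2 := CondIndep.sup hm' hXm.comap_le hYm.comap_le P h
    have hEXle : MeasurableSpace.comap EX inferInstance ≤
        MeasurableSpace.comap X inferInstance ⊔ MeasurableSpace.comap Z inferInstance := by
      refine measurable_iff_comap_le.mp ?_
      rw [hEXfun]
      exact Measurable.sub (measurable_iff_comap_le.mpr le_sup_left)
        (hf.comp (measurable_iff_comap_le.mpr le_sup_right))
    have hEYle : MeasurableSpace.comap EY inferInstance ≤
        MeasurableSpace.comap Y inferInstance ⊔ MeasurableSpace.comap Z inferInstance := by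
      refine measurable_iff_comap_le.mp ?_
      rw [hEYfun]
      exact Measurable.sub (measurable_iff_comap_le.mpr le_sup_left)
        (hg.comp (measurable_iff_comap_le.mpr le_sup_right))
    have h3 : CondIndepFun (MeasurableSpace.comap Z inferInstance) hm' EX EY P := by
      rw [condIndepFun_iff_condIndep]
      exact condIndep_of_condIndep_of_le_left
        (condIndep_of_condIndep_of_le_right h2 hEYle) hEXle
    rw [indepFun_iff_measure_inter_preimage_eq_mul]
    intro s t hs ht
    have h4 := (condIndepFun_iff_condExp_inter_preimage_eq_mul hEX hEY).mp h3 s t hs ht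
    have hsuple : MeasurableSpace.comap EX inferInstance ⊔
        MeasurableSpace.comap EY inferInstance ≤ ‹MeasurableSpace Ω› :=
      sup_le hEX.comap_le hEY.comap_le
    have hmsX : MeasurableSet[MeasurableSpace.comap EX inferInstance ⊔
        MeasurableSpace.comap EY inferInstance] (EX ⁻¹' s) :=
      (le_sup_left : MeasurableSpace.comap EX inferInstance ≤
        MeasurableSpace.comap EX inferInstance ⊔ MeasurableSpace.comap EY inferInstance)
        _ ⟨s, hs, rfl⟩
    have hmsY : MeasurableSet[MeasurableSpace.comap EX inferInstance ⊔
        MeasurableSpace.comap EY inferInstance] (EY ⁻¹' t) :=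
      (le_sup_right : MeasurableSpace.comap EY inferInstance ≤
        MeasurableSpace.comap EX inferInstance ⊔ MeasurableSpace.comap EY inferInstance)
        _ ⟨t, ht, rfl⟩
    have c1 : (P⟦EX ⁻¹' s ∩ EY ⁻¹' t | MeasurableSpace.comap Z inferInstance⟧) =ᵐ[P]
        fun _ => (P (EX ⁻¹' s ∩ EY ⁻¹' t)).toReal :=
      condexp_set_const_of_indep hm' hsuple P (hmsX.inter hmsY) hIndepSup
    have c2 : (P⟦EX ⁻¹' s | MeasurableSpace.comap Z inferInstance⟧) =ᵐ[P] fun _ => (P (EX ⁻¹' s)).toReal :=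
      condexp_set_const_of_indep hm' hsuple P hmsX hIndepSup
    have c3 : (P⟦EY ⁻¹' t | MeasurableSpace.comap Z inferInstance⟧) =ᵐ[P] fun _ => (P (EY ⁻¹' t)).toReal :=
      condexp_set_const_of_indep hm' hsuple P hmsY hIndepSup
    haveI : (MeasureTheory.ae P).NeBot := ae_neBot.mpr (IsProbabilityMeasure.ne_zero P)
    obtain ⟨ω, h4ω, c1ω, c2ω, c3ω⟩ := (h4.and (c1.and (c2.and c3))).exists
    simp only at h4ω c1ω c2ω c3ω
    rw [c1ω, c2ω, c3ω] at h4ω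
    refine (ENNReal.toReal_eq_toReal_iff' (measure_ne_top _ _)
      (ENNReal.mul_ne_top (measure_ne_top _ _) (measure_ne_top _ _))).mp ?_
    rw [ENNReal.toReal_mul]
    exact h4ω
  · intro h
    rw [IndepFun_iff_Indep] at h
    have h2 := condIndep_sup_of_mutual_indep hm' hEX.comap_le hEY.comap_le P h hIndepSup
    have hXle : MeasurableSpace.comap X inferInstance ≤
        MeasurableSpace.comap EX inferInstance ⊔ MeasurableSpace.comap Z inferInstance := by
      refine measurable_iff_comap_le.mp ?_
      rw [hXfun]
      exact Measurable.add (hf.comp (measurable_iff_comap_le.mpr le_sup_right))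
        (measurable_iff_comap_le.mpr le_sup_left)
    have hYle : MeasurableSpace.comap Y inferInstance ≤
        MeasurableSpace.comap EY inferInstance ⊔ MeasurableSpace.comap Z inferInstance := by
      refine measurable_iff_comap_le.mp ?_
      rw [hYfun]
      exact Measurable.add (hg.comp (measurable_iff_comap_le.mpr le_sup_right))
        (measurable_iff_comap_le.mpr le_sup_left)
    rw [condIndepFun_iff_condIndep]
    exact condIndep_of_condIndep_of_le_left
      (condIndep_of_condIndep_of_le_right h2 hYle) hXle
end

section
/- If (ε_X, ε_Y) is independent of Z, and X = f(ε_X, Z), Y = g(ε_Y, Z) with f, g invertible in their first argument, then the conditional mutual information I(X; Y | Z) equals the mutual information I(ε_X; ε_Y). -/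
open MeasureTheory ProbabilityTheory

/-- Kullback–Leibler divergence `∫ log (dμ/dν) dμ` (for `μ ≪ ν`). -/
noncomputable def klDivergence {α : Type*} [MeasurableSpace α] (μ ν : Measure α) : ℝ :=
  ∫ x, Real.log (μ.rnDeriv ν x).toReal ∂μ

/-- Mutual information `I(X; Y) = KL(P_{XY} ‖ P_X ⊗ P_Y)`. -/
noncomputable def mutualInfo {Ω α β : Type*} [MeasurableSpace Ω]
    [MeasurableSpace α] [MeasurableSpace β]
    (X : Ω → α) (Y : Ω → β) (P : Measure Ω) : ℝ :=
  klDivergence (P.map fun ω => (X ω, Y ω)) ((P.map X).prod (P.map Y))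

/-- Conditional mutual information
`I(X; Y | Z) = KL(P_{Z,(X,Y)} ‖ P_Z ⊗ (P_{X|Z} × P_{Y|Z}))`. -/
noncomputable def condMutualInfo {Ω β : Type*} [MeasurableSpace Ω] [MeasurableSpace β]
    (X Y : Ω → ℝ) (Z : Ω → β) (P : Measure Ω) [IsFiniteMeasure P] : ℝ :=
  klDivergence (P.map fun ω => (Z ω, (X ω, Y ω)))
    ((P.map Z).compProd ((condDistrib X Z P).prod (condDistrib Y Z P)))

section Aux

open Filter

variable {α β : Type*} [MeasurableSpace α] [MeasurableSpace β]

/-- Pull back absolute continuity through a measurable embedding. -/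
lemma aux_ac_of_map_ac {T : α → β} (hT : MeasurableEmbedding T) {μ ν : Measure α}
    (h : μ.map T ≪ ν.map T) : μ ≪ ν := by
  refine Measure.AbsolutelyContinuous.mk fun s hs hν => ?_
  have h1 : ν.map T (T '' s) = 0 := by
    rw [hT.map_apply, hT.injective.preimage_image]; exact hν
  have h2 := h h1
  rwa [hT.map_apply, hT.injective.preimage_image] at h2

/-- Integrating a function of the second coordinate against a product with a probability
measure in the first coordinate. -/
lemma aux_integral_snd (μ : Measure α) (ν : Measure β) [IsProbabilityMeasure μ]
    [SFinite ν] {h : β → ℝ} (hm : AEStronglyMeasurable h ν) :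
    ∫ p, h p.2 ∂(μ.prod ν) = ∫ y, h y ∂ν := by
  have hsnd : (μ.prod ν).map Prod.snd = ν := by
    rw [Measure.map_snd_prod, measure_univ, one_smul]
  calc ∫ p, h p.2 ∂(μ.prod ν)
      = ∫ y, h y ∂((μ.prod ν).map Prod.snd) :=
        (integral_map measurable_snd.aemeasurable (by rwa [hsnd])).symm
    _ = ∫ y, h y ∂ν := by rw [hsnd]

/-- The Radon–Nikodym derivative of a product with a common first factor. -/
lemma aux_rnDeriv_prod (α' : Measure α) (μ ν : Measure β) [IsProbabilityMeasure α']
    [IsProbabilityMeasure μ] [IsProbabilityMeasure ν] (hμν : μ ≪ ν) :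
    (fun p : α × β => μ.rnDeriv ν p.2) =ᵐ[α'.prod ν] (α'.prod μ).rnDeriv (α'.prod ν) := by
  have hwd : (α'.prod ν).withDensity (fun p => μ.rnDeriv ν p.2) = α'.prod μ := by
    symm
    refine Measure.prod_eq fun s t hs ht => ?_
    rw [withDensity_apply _ (hs.prod ht), ← Measure.prod_restrict,
      lintegral_prod (fun p : α × β => μ.rnDeriv ν p.2)
        ((μ.measurable_rnDeriv ν).comp measurable_snd).aemeasurable]
    have h1 : ∀ x : α, ∫⁻ y, μ.rnDeriv ν y ∂(ν.restrict t) = μ t := fun _ =>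
      Measure.setLIntegral_rnDeriv hμν t
    calc ∫⁻ x, ∫⁻ y, μ.rnDeriv ν y ∂(ν.restrict t) ∂(α'.restrict s)
        = ∫⁻ _, μ t ∂(α'.restrict s) := by exact lintegral_congr h1
      _ = μ t * α' s := by rw [lintegral_const, Measure.restrict_apply_univ]
      _ = α' s * μ t := mul_comm _ _
  refine Measure.eq_rnDeriv ((μ.measurable_rnDeriv ν).comp measurable_snd)
    (Measure.MutuallySingular.zero_left) ?_
  rw [zero_add, hwd]

/-- KL divergence is invariant under pushing forward by a measurable embedding. -/
lemma aux_klDivergence_map {T : α → β} (hT : MeasurableEmbedding T)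
    (μ ν : Measure α) [SigmaFinite μ] [SigmaFinite ν] (hμν : μ ≪ ν) :
    klDivergence (μ.map T) (ν.map T) = klDivergence μ ν := by
  unfold klDivergence
  have hsm : AEStronglyMeasurable
      (fun x => Real.log ((μ.map T).rnDeriv (ν.map T) x).toReal) (μ.map T) :=
    (Real.measurable_log.comp
      (Measure.measurable_rnDeriv _ _).ennreal_toReal).aestronglyMeasurable
  rw [integral_map hT.measurable.aemeasurable hsm]
  exact integral_congr_ae (((hT.rnDeriv_map μ ν).filter_mono hμν.ae_le).mono
    fun x hx => congrArg (fun t : ENNReal => Real.log t.toReal) hx)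

/-- KL divergence of products with a common probability first factor. -/
lemma aux_klDivergence_prod (α' : Measure α) (μ ν : Measure β) [IsProbabilityMeasure α']
    [IsProbabilityMeasure μ] [IsProbabilityMeasure ν] (hμν : μ ≪ ν) :
    klDivergence (α'.prod μ) (α'.prod ν) = klDivergence μ ν := by
  unfold klDivergence
  have hac : α'.prod μ ≪ α'.prod ν := Measure.AbsolutelyContinuous.rfl.prod hμν
  have h4 : (fun p : α × β => μ.rnDeriv ν p.2) =ᵐ[α'.prod μ]
      (α'.prod μ).rnDeriv (α'.prod ν) :=
    (aux_rnDeriv_prod α' μ ν hμν).filter_mono hac.ae_le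
  have h5 : (fun p : α × β => Real.log ((α'.prod μ).rnDeriv (α'.prod ν) p).toReal)
      =ᵐ[α'.prod μ] fun p => Real.log ((μ.rnDeriv ν) p.2).toReal :=
    h4.mono fun p hp => (congrArg (fun t : ENNReal => Real.log t.toReal) hp).symm
  rw [integral_congr_ae h5]
  exact aux_integral_snd α' μ
    ((Real.measurable_log.comp
      (Measure.measurable_rnDeriv _ _).ennreal_toReal).comp measurable_id).aestronglyMeasurable

/-- A differentiable map of the real line sends null sets to null sets. -/
lemma aux_diff_image_null {φ : ℝ → ℝ} (hφ : Differentiable ℝ φ) {A : Set ℝ}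
    (hA : volume A = 0) : volume (φ '' A) = 0 :=
  addHaar_image_eq_zero_of_differentiableOn_of_addHaar_eq_zero volume hφ.differentiableOn hA

end Aux

/-- With `X = f(ε_X, Z)`, `Y = g(ε_Y, Z)`, `(ε_X, ε_Y) ⟂ Z` and `f, g`
invertible (diffeomorphisms) in their first argument, `I(X; Y | Z) = I(ε_X; ε_Y)`. -/
theorem cond_mutual_info_eq_latent_mutual_info
    {Ω : Type*} [MeasurableSpace Ω] [StandardBorelSpace Ω] [Nonempty Ω] {d : ℕ}
    (P : Measure Ω) [IsProbabilityMeasure P]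
    (εX εY : Ω → ℝ) (Z : Ω → (Fin d → ℝ))
    (hεX : Measurable εX) (hεY : Measurable εY) (hZ : Measurable Z)
    (f g : ℝ → (Fin d → ℝ) → ℝ)
    (hf_meas : Measurable fun q : ℝ × (Fin d → ℝ) => f q.1 q.2)
    (hg_meas : Measurable fun q : ℝ × (Fin d → ℝ) => g q.1 q.2)
    (hf_bij : ∀ z, Function.Bijective fun e => f e z)
    (hg_bij : ∀ z, Function.Bijective fun e => g e z)
    (hf_diff : ∀ z, Differentiable ℝ fun e => f e z)
    (hg_diff : ∀ z, Differentiable ℝ fun e => g e z)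
    (hf_inv_diff : ∀ z, Differentiable ℝ (Function.invFun fun e => f e z))
    (hg_inv_diff : ∀ z, Differentiable ℝ (Function.invFun fun e => g e z))
    (hindep : IndepFun (fun ω => (εX ω, εY ω)) Z P)
    (X Y : Ω → ℝ) (hX : ∀ ω, X ω = f (εX ω) (Z ω)) (hY : ∀ ω, Y ω = g (εY ω) (Z ω))
    (p : ℝ × ℝ × (Fin d → ℝ) → ℝ) (hp_pos : ∀ v, 0 < p v) (hp_smooth : Continuous p)
    (hp : P.map (fun ω => (X ω, Y ω, Z ω)) =
      volume.withDensity fun v => ENNReal.ofReal (p v)) :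
    condMutualInfo X Y Z P = mutualInfo εX εY P := by
  -- measurability of X, Y
  have hXm : Measurable X := by
    have : X = fun ω => f (εX ω) (Z ω) := funext hX
    rw [this]; exact hf_meas.comp (hεX.prodMk hZ)
  have hYm : Measurable Y := by
    have : Y = fun ω => g (εY ω) (Z ω) := funext hY
    rw [this]; exact hg_meas.comp (hεY.prodMk hZ)
  -- probability instances
  haveI : IsProbabilityMeasure (P.map Z) := Measure.isProbabilityMeasure_map hZ.aemeasurable
  haveI : IsProbabilityMeasure (P.map εX) := Measure.isProbabilityMeasure_map hεX.aemeasurable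
  haveI : IsProbabilityMeasure (P.map εY) := Measure.isProbabilityMeasure_map hεY.aemeasurable
  haveI : IsProbabilityMeasure (P.map fun ω => (εX ω, εY ω)) :=
    Measure.isProbabilityMeasure_map (hεX.prodMk hεY).aemeasurable
  haveI : IsProbabilityMeasure (P.map fun ω => (X ω, Y ω, Z ω)) :=
    Measure.isProbabilityMeasure_map (hXm.prodMk (hYm.prodMk hZ)).aemeasurable
  haveI : IsProbabilityMeasure (P.map fun ω => (Z ω, (X ω, Y ω))) :=
    Measure.isProbabilityMeasure_map (hZ.prodMk (hXm.prodMk hYm)).aemeasurable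
  -- sectionwise maps and inverses
  have hfzm : ∀ z, Measurable fun e => f e z := fun z =>
    hf_meas.comp (measurable_id.prodMk measurable_const)
  have hgzm : ∀ z, Measurable fun e => g e z := fun z =>
    hg_meas.comp (measurable_id.prodMk measurable_const)
  have hψl : ∀ z, Function.LeftInverse (Function.invFun fun e => f e z) fun e => f e z :=
    fun z => Function.leftInverse_invFun (hf_bij z).injective
  have hψr : ∀ z, Function.RightInverse (Function.invFun fun e => f e z) fun e => f e z :=
    fun z => Function.rightInverse_invFun (hf_bij z).surjective
  have hχl : ∀ z, Function.LeftInverse (Function.invFun fun e => g e z) fun e => g e z :=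
    fun z => Function.leftInverse_invFun (hg_bij z).injective
  have hχr : ∀ z, Function.RightInverse (Function.invFun fun e => g e z) fun e => g e z :=
    fun z => Function.rightInverse_invFun (hg_bij z).surjective
  -- the fiberwise transformation T
  set T : (Fin d → ℝ) × (ℝ × ℝ) → (Fin d → ℝ) × (ℝ × ℝ) :=
    fun q => (q.1, (f q.2.1 q.1, g q.2.2 q.1)) with hTdef
  have hTm : Measurable T :=
    measurable_fst.prodMk ((hf_meas.comp (measurable_snd.fst.prodMk measurable_fst)).prodMk
      (hg_meas.comp (measurable_snd.snd.prodMk measurable_fst)))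
  have hTinj : Function.Injective T := by
    rintro ⟨z, a, b⟩ ⟨z', a', b'⟩ h
    simp only [hTdef, Prod.mk.injEq] at h
    obtain ⟨rfl, h2, h3⟩ := h
    exact Prod.ext rfl (Prod.ext ((hf_bij z).injective h2) ((hg_bij z).injective h3))
  have hT : MeasurableEmbedding T := hTm.measurableEmbedding hTinj
  -- independence consequences
  have hIeZ : P.map (fun ω => (Z ω, (εX ω, εY ω)))
      = (P.map Z).prod (P.map fun ω => (εX ω, εY ω)) :=
    (indepFun_iff_map_prod_eq_prod_map_map hZ.aemeasurable
      (hεX.prodMk hεY).aemeasurable).mp hindep.symm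
  have hIxZ : P.map (fun ω => (Z ω, εX ω)) = (P.map Z).prod (P.map εX) :=
    (indepFun_iff_map_prod_eq_prod_map_map hZ.aemeasurable hεX.aemeasurable).mp
      ((hindep.comp measurable_fst measurable_id).symm)
  have hIyZ : P.map (fun ω => (Z ω, εY ω)) = (P.map Z).prod (P.map εY) :=
    (indepFun_iff_map_prod_eq_prod_map_map hZ.aemeasurable hεY.aemeasurable).mp
      ((hindep.comp measurable_snd measurable_id).symm)
  -- Step A : the joint law of (Z, (X, Y)) is the image under T of the product law
  have hA : P.map (fun ω => (Z ω, (X ω, Y ω)))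
      = ((P.map Z).prod (P.map fun ω => (εX ω, εY ω))).map T := by
    rw [← hIeZ, Measure.map_map hTm (hZ.prodMk (hεX.prodMk hεY))]
    congr 1
    funext ω
    simp only [hTdef, Function.comp_apply]
    rw [hX ω, hY ω]
  -- the kernels z ↦ (f ⬝ z)_* (law εX) and z ↦ (g ⬝ z)_* (law εY)
  have hκfm : Measurable (fun z : Fin d → ℝ => (P.map εX).map (fun e => f e z)) := by
    apply Measure.measurable_of_measurable_coe
    intro s hs
    have heq : (fun z : Fin d → ℝ => (P.map εX).map (fun e => f e z) s)
        = fun z => (P.map εX) (Prod.mk z ⁻¹' {q : (Fin d → ℝ) × ℝ | f q.2 q.1 ∈ s}) := by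
      funext z
      rw [Measure.map_apply (hfzm z) hs]
      rfl
    rw [heq]
    exact measurable_measure_prodMk_left
      ((hf_meas.comp (measurable_snd.prodMk measurable_fst)) hs)
  have hκgm : Measurable (fun z : Fin d → ℝ => (P.map εY).map (fun e => g e z)) := by
    apply Measure.measurable_of_measurable_coe
    intro s hs
    have heq : (fun z : Fin d → ℝ => (P.map εY).map (fun e => g e z) s)
        = fun z => (P.map εY) (Prod.mk z ⁻¹' {q : (Fin d → ℝ) × ℝ | g q.2 q.1 ∈ s}) := by
      funext z
      rw [Measure.map_apply (hgzm z) hs]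
      rfl
    rw [heq]
    exact measurable_measure_prodMk_left
      ((hg_meas.comp (measurable_snd.prodMk measurable_fst)) hs)
  set κf : Kernel (Fin d → ℝ) ℝ := ⟨fun z => (P.map εX).map (fun e => f e z), hκfm⟩ with hκfdef
  set κg : Kernel (Fin d → ℝ) ℝ := ⟨fun z => (P.map εY).map (fun e => g e z), hκgm⟩ with hκgdef
  have hκf_apply : ∀ z, κf z = (P.map εX).map (fun e => f e z) := fun z => rfl
  have hκg_apply : ∀ z, κg z = (P.map εY).map (fun e => g e z) := fun z => rfl
  haveI : IsMarkovKernel κf :=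
    ⟨fun z => by rw [hκf_apply]; exact Measure.isProbabilityMeasure_map (hfzm z).aemeasurable⟩
  haveI : IsMarkovKernel κg :=
    ⟨fun z => by rw [hκg_apply]; exact Measure.isProbabilityMeasure_map (hgzm z).aemeasurable⟩
  -- Step B1 : joint laws as compProds
  have hΦm : Measurable (fun q : (Fin d → ℝ) × ℝ => (q.1, f q.2 q.1)) :=
    measurable_fst.prodMk (hf_meas.comp (measurable_snd.prodMk measurable_fst))
  have hΨm : Measurable (fun q : (Fin d → ℝ) × ℝ => (q.1, g q.2 q.1)) :=
    measurable_fst.prodMk (hg_meas.comp (measurable_snd.prodMk measurable_fst))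
  have hBx : P.map (fun ω => (Z ω, X ω)) = (P.map Z).compProd κf := by
    have hmap : P.map (fun ω => (Z ω, X ω))
        = ((P.map Z).prod (P.map εX)).map (fun q : (Fin d → ℝ) × ℝ => (q.1, f q.2 q.1)) := by
      rw [← hIxZ, Measure.map_map hΦm (hZ.prodMk hεX)]
      congr 1
      funext ω
      simp only [Function.comp_apply]
      rw [hX ω]
    rw [hmap]
    ext s hs
    rw [Measure.map_apply hΦm hs, Measure.prod_apply (hΦm hs), Measure.compProd_apply hs]
    refine lintegral_congr fun z => ?_
    rw [hκf_apply, Measure.map_apply (hfzm z) (measurable_prodMk_left hs)]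
    rfl
  have hBy : P.map (fun ω => (Z ω, Y ω)) = (P.map Z).compProd κg := by
    have hmap : P.map (fun ω => (Z ω, Y ω))
        = ((P.map Z).prod (P.map εY)).map (fun q : (Fin d → ℝ) × ℝ => (q.1, g q.2 q.1)) := by
      rw [← hIyZ, Measure.map_map hΨm (hZ.prodMk hεY)]
      congr 1
      funext ω
      simp only [Function.comp_apply]
      rw [hY ω]
    rw [hmap]
    ext s hs
    rw [Measure.map_apply hΨm hs, Measure.prod_apply (hΨm hs), Measure.compProd_apply hs]
    refine lintegral_congr fun z => ?_
    rw [hκg_apply, Measure.map_apply (hgzm z) (measurable_prodMk_left hs)]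
    rfl
  -- a.e. identification with condDistrib
  have hκfe : ∀ᵐ z ∂(P.map Z), κf z = condDistrib X Z P z :=
    (condDistrib_ae_eq_of_measure_eq_compProd_of_measurable hZ hXm (κ := κf) hBx).symm
  have hκge : ∀ᵐ z ∂(P.map Z), κg z = condDistrib Y Z P z :=
    (condDistrib_ae_eq_of_measure_eq_compProd_of_measurable hZ hYm (κ := κg) hBy).symm
  have hprod_ae : (condDistrib X Z P).prod (condDistrib Y Z P) =ᵐ[P.map Z] κf.prod κg := by
    filter_upwards [hκfe, hκge] with z h1 h2
    rw [Kernel.prod_apply, Kernel.prod_apply, h1, h2]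
  have hBcond : (P.map Z).compProd ((condDistrib X Z P).prod (condDistrib Y Z P))
      = (P.map Z).compProd (κf.prod κg) := Measure.compProd_congr hprod_ae
  -- Step B3 : the compProd measure is the image under T of the triple product
  have hB3 : (P.map Z).compProd (κf.prod κg)
      = ((P.map Z).prod ((P.map εX).prod (P.map εY))).map T := by
    ext s hs
    rw [Measure.compProd_apply hs, Measure.map_apply hTm hs, Measure.prod_apply (hTm hs)]
    refine lintegral_congr fun z => ?_
    rw [Kernel.prod_apply, hκf_apply, hκg_apply,
      Measure.map_prod_map _ _ (hfzm z) (hgzm z),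
      Measure.map_apply ((hfzm z).prodMap (hgzm z)) (measurable_prodMk_left hs)]
    rfl
  -- absolute continuity facts coming from the positive density
  have hj_ac : P.map (fun ω => (X ω, Y ω, Z ω)) ≪ (volume : Measure (ℝ × ℝ × (Fin d → ℝ))) := by
    rw [hp]; exact withDensity_absolutelyContinuous _ _
  have hvol_j : (volume : Measure (ℝ × ℝ × (Fin d → ℝ))) ≪ P.map (fun ω => (X ω, Y ω, Z ω)) := by
    rw [hp]
    refine Measure.AbsolutelyContinuous.mk fun s hs h0 => ?_
    rw [withDensity_apply _ hs,
      lintegral_eq_zero_iff (hp_smooth.measurable.ennreal_ofReal)] at h0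
    have h1 : ∀ᵐ v ∂(volume : Measure (ℝ × ℝ × (Fin d → ℝ))), v ∈ s →
        ENNReal.ofReal (p v) = 0 := (ae_restrict_iff' hs).mp h0
    have h2 : ∀ᵐ v ∂(volume : Measure (ℝ × ℝ × (Fin d → ℝ))), v ∉ s := by
      filter_upwards [h1] with v hv hvs
      have := hv hvs
      rw [ENNReal.ofReal_eq_zero] at this
      exact absurd this (not_le.mpr (hp_pos v))
    exact measure_eq_zero_iff_ae_notMem.mpr h2
  -- measure-preserving permutation (x, y, z) ↦ (z, (x, y))
  have hw : MeasurePreserving (fun v : ℝ × ℝ × (Fin d → ℝ) => (v.2.2, (v.1, v.2.1)))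
      (volume : Measure (ℝ × ℝ × (Fin d → ℝ))) (volume : Measure ((Fin d → ℝ) × (ℝ × ℝ))) := by
    have h1 : MeasurePreserving
        (MeasurableEquiv.prodAssoc.symm : ℝ × ℝ × (Fin d → ℝ) ≃ᵐ (ℝ × ℝ) × (Fin d → ℝ))
        ((volume : Measure ℝ).prod ((volume : Measure ℝ).prod (volume : Measure (Fin d → ℝ))))
        (((volume : Measure ℝ).prod (volume : Measure ℝ)).prod (volume : Measure (Fin d → ℝ))) :=
      (measurePreserving_prodAssoc _ _ _).symm _
    have h2 : MeasurePreserving (Prod.swap)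
        (((volume : Measure ℝ).prod (volume : Measure ℝ)).prod (volume : Measure (Fin d → ℝ)))
        ((volume : Measure (Fin d → ℝ)).prod ((volume : Measure ℝ).prod (volume : Measure ℝ))) :=
      Measure.measurePreserving_swap
    have h3 := h2.comp h1
    have hfun : (fun v : ℝ × ℝ × (Fin d → ℝ) => (v.2.2, (v.1, v.2.1)))
        = (Prod.swap ∘ (MeasurableEquiv.prodAssoc.symm
            : ℝ × ℝ × (Fin d → ℝ) ≃ᵐ (ℝ × ℝ) × (Fin d → ℝ))) := by
      funext v; rfl
    rw [hfun]
    exact h3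
  -- the law of (Z, (X, Y)) is equivalent to Lebesgue measure
  have hμ2 : P.map (fun ω => (Z ω, (X ω, Y ω)))
      = (P.map (fun ω => (X ω, Y ω, Z ω))).map
        (fun v : ℝ × ℝ × (Fin d → ℝ) => (v.2.2, (v.1, v.2.1))) := by
    rw [Measure.map_map hw.measurable (hXm.prodMk (hYm.prodMk hZ))]
    congr 1
  have hμ2_ac : P.map (fun ω => (Z ω, (X ω, Y ω)))
      ≪ (volume : Measure ((Fin d → ℝ) × (ℝ × ℝ))) := by
    rw [hμ2, ← hw.map_eq]
    exact hj_ac.map hw.measurable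
  have hvol_μ2 : (volume : Measure ((Fin d → ℝ) × (ℝ × ℝ)))
      ≪ P.map (fun ω => (Z ω, (X ω, Y ω))) := by
    rw [hμ2, ← hw.map_eq]
    exact hvol_j.map hw.measurable
  -- volume of ℝ × ℝ is infinite
  have hRRtop : (volume : Measure (ℝ × ℝ)) Set.univ = ⊤ := by
    rw [Measure.volume_eq_prod, ← Set.univ_prod_univ, Measure.prod_prod, Real.volume_univ,
      ENNReal.top_mul_top]
  -- marginal of Z is equivalent to volume
  have hμZ_null : ∀ {A : Set (Fin d → ℝ)}, MeasurableSet A →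
      ((P.map Z) A = 0 ↔ (volume : Measure (Fin d → ℝ)) A = 0) := by
    intro A hA'
    have h1 : (P.map Z) A = P.map (fun ω => (Z ω, (X ω, Y ω))) (A ×ˢ Set.univ) := by
      rw [Measure.map_apply hZ hA',
        Measure.map_apply (hZ.prodMk (hXm.prodMk hYm)) (hA'.prod MeasurableSet.univ)]
      congr 1
      ext ω
      simp
    rw [h1]
    constructor
    · intro h0
      have h2 := hvol_μ2 h0
      rw [Measure.volume_eq_prod, Measure.prod_prod, hRRtop] at h2
      rcases mul_eq_zero.mp h2 with h3 | h3
      · exact h3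
      · exact absurd h3 ENNReal.top_ne_zero
    · intro h0
      refine hμ2_ac ?_
      rw [Measure.volume_eq_prod, Measure.prod_prod, h0, zero_mul]
  have hvolZ_ac : (volume : Measure (Fin d → ℝ)) ≪ P.map Z :=
    Measure.AbsolutelyContinuous.mk fun A hA h0 => (hμZ_null hA).mp h0
  have hvolE_ne : (volume : Measure (Fin d → ℝ)) ≠ 0 := by
    intro h
    have h0 : (volume : Measure (Fin d → ℝ)) Set.univ = 0 := by rw [h]; rfl
    have := (hμZ_null MeasurableSet.univ).mpr h0
    rw [measure_univ] at this
    exact one_ne_zero this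
  haveI hvolE_nebot : (MeasureTheory.ae (volume : Measure (Fin d → ℝ))).NeBot :=
    ae_neBot.mpr hvolE_ne
  -- marginals of εX and εY are equivalent to volume
  have hμex_null : ∀ {A : Set ℝ}, MeasurableSet A →
      ((P.map εX) A = 0 ↔ (volume : Measure ℝ) A = 0) := by
    intro A hA'
    have hSmeas : MeasurableSet (T '' (Set.univ ×ˢ (A ×ˢ Set.univ))) :=
      hT.measurableSet_image' (MeasurableSet.univ.prod (hA'.prod MeasurableSet.univ))
    have h1 : (P.map εX) A
        = P.map (fun ω => (Z ω, (X ω, Y ω))) (T '' (Set.univ ×ˢ (A ×ˢ Set.univ))) := by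
      rw [hA, hT.map_apply, hT.injective.preimage_image, Measure.prod_prod, measure_univ,
        one_mul, Measure.map_apply (hεX.prodMk hεY) (hA'.prod MeasurableSet.univ),
        Measure.map_apply hεX hA']
      congr 1
      ext ω
      simp
    -- slices of the image set
    have hslice : ∀ z : Fin d → ℝ, Prod.mk z ⁻¹' (T '' (Set.univ ×ˢ (A ×ˢ Set.univ)))
        = ((fun e => f e z) '' A) ×ˢ (Set.univ : Set ℝ) := by
      intro z
      ext ⟨x, y⟩
      constructor
      · rintro ⟨⟨z', a, b⟩, ⟨-, haA, -⟩, heq⟩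
        simp only [hTdef, Prod.mk.injEq] at heq
        obtain ⟨rfl, hfx, hgy⟩ := heq
        exact ⟨⟨a, haA, hfx⟩, trivial⟩
      · rintro ⟨⟨a, haA, hfx⟩, -⟩
        refine ⟨(z, a, Function.invFun (fun e => g e z) y), ⟨trivial, haA, trivial⟩, ?_⟩
        simp only [hTdef, Prod.mk.injEq]
        exact ⟨by trivial, hfx, hχr z y⟩
    have himg_iff : ∀ z : Fin d → ℝ,
        ((volume : Measure (ℝ × ℝ)) (Prod.mk z ⁻¹' (T '' (Set.univ ×ˢ (A ×ˢ Set.univ)))) = 0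
          ↔ (volume : Measure ℝ) A = 0) := by
      intro z
      rw [hslice z, Measure.volume_eq_prod, Measure.prod_prod, Real.volume_univ, ENNReal.mul_top']
      constructor
      · intro h0
        by_cases hie : (volume : Measure ℝ) ((fun e => f e z) '' A) = 0
        · have hback : A = (Function.invFun fun e => f e z) '' ((fun e => f e z) '' A) := by
            rw [← Set.image_comp]
            have : ∀ x ∈ A, ((Function.invFun fun e => f e z) ∘ fun e => f e z) x = x :=
              fun x _ => hψl z x
            rw [Set.image_congr this, Set.image_id']
          rw [hback]
          exact aux_diff_image_null (hf_inv_diff z) hie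
        · simp [hie] at h0
      · intro h0
        have := aux_diff_image_null (hf_diff z) h0
        simp [this]
    rw [h1]
    constructor
    · intro h0
      have hvol0 := hvol_μ2 h0
      rw [Measure.volume_eq_prod, Measure.measure_prod_null hSmeas] at hvol0
      obtain ⟨z, hz⟩ := hvol0.exists
      exact (himg_iff z).mp hz
    · intro h0
      refine hμ2_ac ?_
      rw [Measure.volume_eq_prod, Measure.measure_prod_null hSmeas]
      exact Filter.Eventually.of_forall fun z => (himg_iff z).mpr h0
  have hμey_null : ∀ {A : Set ℝ}, MeasurableSet A →
      ((P.map εY) A = 0 ↔ (volume : Measure ℝ) A = 0) := by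
    intro A hA'
    have hSmeas : MeasurableSet (T '' (Set.univ ×ˢ (Set.univ ×ˢ A))) :=
      hT.measurableSet_image' (MeasurableSet.univ.prod (MeasurableSet.univ.prod hA'))
    have h1 : (P.map εY) A
        = P.map (fun ω => (Z ω, (X ω, Y ω))) (T '' (Set.univ ×ˢ (Set.univ ×ˢ A))) := by
      rw [hA, hT.map_apply, hT.injective.preimage_image, Measure.prod_prod, measure_univ,
        one_mul, Measure.map_apply (hεX.prodMk hεY) (MeasurableSet.univ.prod hA'),
        Measure.map_apply hεY hA']
      congr 1
      ext ω
      simp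
    have hslice : ∀ z : Fin d → ℝ, Prod.mk z ⁻¹' (T '' (Set.univ ×ˢ (Set.univ ×ˢ A)))
        = (Set.univ : Set ℝ) ×ˢ ((fun e => g e z) '' A) := by
      intro z
      ext ⟨x, y⟩
      constructor
      · rintro ⟨⟨z', a, b⟩, ⟨-, -, hbA⟩, heq⟩
        simp only [hTdef, Prod.mk.injEq] at heq
        obtain ⟨rfl, hfx, hgy⟩ := heq
        exact ⟨trivial, ⟨b, hbA, hgy⟩⟩
      · rintro ⟨-, ⟨b, hbA, hgy⟩⟩
        refine ⟨(z, Function.invFun (fun e => f e z) x, b), ⟨trivial, trivial, hbA⟩, ?_⟩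
        simp only [hTdef, Prod.mk.injEq]
        exact ⟨by trivial, hψr z x, hgy⟩
    have himg_iff : ∀ z : Fin d → ℝ,
        ((volume : Measure (ℝ × ℝ)) (Prod.mk z ⁻¹' (T '' (Set.univ ×ˢ (Set.univ ×ˢ A)))) = 0
          ↔ (volume : Measure ℝ) A = 0) := by
      intro z
      rw [hslice z, Measure.volume_eq_prod, Measure.prod_prod, Real.volume_univ, ENNReal.top_mul']
      constructor
      · intro h0
        by_cases hie : (volume : Measure ℝ) ((fun e => g e z) '' A) = 0
        · have hback : A = (Function.invFun fun e => g e z) '' ((fun e => g e z) '' A) := by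
            rw [← Set.image_comp]
            have : ∀ x ∈ A, ((Function.invFun fun e => g e z) ∘ fun e => g e z) x = x :=
              fun x _ => hχl z x
            rw [Set.image_congr this, Set.image_id']
          rw [hback]
          exact aux_diff_image_null (hg_inv_diff z) hie
        · simp [hie] at h0
      · intro h0
        have := aux_diff_image_null (hg_diff z) h0
        simp [this]
    rw [h1]
    constructor
    · intro h0
      have hvol0 := hvol_μ2 h0
      rw [Measure.volume_eq_prod, Measure.measure_prod_null hSmeas] at hvol0
      obtain ⟨z, hz⟩ := hvol0.exists
      exact (himg_iff z).mp hz
    · intro h0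
      refine hμ2_ac ?_
      rw [Measure.volume_eq_prod, Measure.measure_prod_null hSmeas]
      exact Filter.Eventually.of_forall fun z => (himg_iff z).mpr h0
  have hvolex_ac : (volume : Measure ℝ) ≪ P.map εX :=
    Measure.AbsolutelyContinuous.mk fun A hA h0 => (hμex_null hA).mp h0
  have hvoley_ac : (volume : Measure ℝ) ≪ P.map εY :=
    Measure.AbsolutelyContinuous.mk fun A hA h0 => (hμey_null hA).mp h0
  -- volume is absolutely continuous wrt each fiber kernel
  have hvolκf : ∀ z, (volume : Measure ℝ) ≪ κf z := by
    intro z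
    refine Measure.AbsolutelyContinuous.mk fun A hA h0 => ?_
    rw [hκf_apply, Measure.map_apply (hfzm z) hA] at h0
    have hpreim : (fun e => f e z) ⁻¹' A = (Function.invFun fun e => f e z) '' A := by
      ext e
      constructor
      · intro he
        exact ⟨f e z, he, hψl z e⟩
      · rintro ⟨x, hx, rfl⟩
        simpa [hψr z x] using hx
    have h1 : (volume : Measure ℝ) ((fun e => f e z) ⁻¹' A) = 0 :=
      (hμex_null ((hfzm z) hA)).mp h0
    rw [hpreim] at h1
    have h2 : A = (fun e => f e z) '' ((Function.invFun fun e => f e z) '' A) := by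
      rw [← Set.image_comp]
      have : ∀ x ∈ A, ((fun e => f e z) ∘ Function.invFun fun e => f e z) x = x :=
        fun x _ => hψr z x
      rw [Set.image_congr this, Set.image_id']
    rw [h2]
    exact aux_diff_image_null (hf_diff z) h1
  have hvolκg : ∀ z, (volume : Measure ℝ) ≪ κg z := by
    intro z
    refine Measure.AbsolutelyContinuous.mk fun A hA h0 => ?_
    rw [hκg_apply, Measure.map_apply (hgzm z) hA] at h0
    have hpreim : (fun e => g e z) ⁻¹' A = (Function.invFun fun e => g e z) '' A := by
      ext e
      constructor
      · intro he
        exact ⟨g e z, he, hχl z e⟩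
      · rintro ⟨x, hx, rfl⟩
        simpa [hχr z x] using hx
    have h1 : (volume : Measure ℝ) ((fun e => g e z) ⁻¹' A) = 0 :=
      (hμey_null ((hgzm z) hA)).mp h0
    rw [hpreim] at h1
    have h2 : A = (fun e => g e z) '' ((Function.invFun fun e => g e z) '' A) := by
      rw [← Set.image_comp]
      have : ∀ x ∈ A, ((fun e => g e z) ∘ Function.invFun fun e => g e z) x = x :=
        fun x _ => hχr z x
      rw [Set.image_congr this, Set.image_id']
    rw [h2]
    exact aux_diff_image_null (hg_diff z) h1
  -- volume ≪ the compProd reference measure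
  have hvolν : (volume : Measure ((Fin d → ℝ) × (ℝ × ℝ))) ≪ (P.map Z).compProd (κf.prod κg) := by
    refine Measure.AbsolutelyContinuous.mk fun s hs h0 => ?_
    rw [Measure.compProd_apply hs,
      lintegral_eq_zero_iff (Kernel.measurable_kernel_prodMk_left hs)] at h0
    have h0' : ∀ᵐ z ∂(volume : Measure (Fin d → ℝ)),
        (κf.prod κg) z (Prod.mk z ⁻¹' s) = 0 := h0.filter_mono hvolZ_ac.ae_le
    rw [Measure.volume_eq_prod, Measure.measure_prod_null hs]
    filter_upwards [h0'] with z hz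
    rw [Kernel.prod_apply] at hz
    haveI : IsProbabilityMeasure (κg z) := IsMarkovKernel.isProbabilityMeasure z
    have hacz : (volume : Measure (ℝ × ℝ)) ≪ (κf z).prod (κg z) := by
      rw [Measure.volume_eq_prod]
      exact (hvolκf z).prod (hvolκg z)
    exact hacz hz
  -- main absolute continuity
  have hμ2ν2 : P.map (fun ω => (Z ω, (X ω, Y ω))) ≪ (P.map Z).compProd (κf.prod κg) :=
    hμ2_ac.trans hvolν
  have hprod_ac : (P.map Z).prod (P.map fun ω => (εX ω, εY ω))
      ≪ (P.map Z).prod ((P.map εX).prod (P.map εY)) := by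
    refine aux_ac_of_map_ac hT ?_
    rw [← hA, ← hB3]
    exact hμ2ν2
  have hee_ac : (P.map fun ω => (εX ω, εY ω)) ≪ (P.map εX).prod (P.map εY) := by
    refine Measure.AbsolutelyContinuous.mk fun s hs h0 => ?_
    have h1 : ((P.map Z).prod ((P.map εX).prod (P.map εY))) (Set.univ ×ˢ s) = 0 := by
      rw [Measure.prod_prod, h0, mul_zero]
    have h2 := hprod_ac h1
    rwa [Measure.prod_prod, measure_univ, one_mul] at h2
  -- final computation
  unfold condMutualInfo mutualInfo
  rw [hBcond, hB3, hA,
    aux_klDivergence_map hT _ _ hprod_ac]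
  exact aux_klDivergence_prod (P.map Z) _ _ hee_ac
end

section
/- Suppose Z = f(X) + E with E independent of X, f nonconstant measurable, and define the regression residual r_X = X − E[X | Z]. Then in general r_X is not independent of Z; concretely, there exist distributions of X, E and a function f (e.g., X, E standard normal and f(x) = x²) for which r_X and Z are dependent. -/
open MeasureTheory ProbabilityTheory Real Set

namespace AnticausalAux

lemma integrable_pow_mul_exp_neg_mul_sq' {b : ℝ} (hb : 0 < b) (n : ℕ) :
    Integrable fun x : ℝ => x ^ n * Real.exp (-b * x ^ 2) := by
  have h := integrable_rpow_mul_exp_neg_mul_sq hb (s := (n : ℝ))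
    (neg_one_lt_zero.trans_le (Nat.cast_nonneg n))
  simpa [Real.rpow_natCast] using h

lemma integrable_pow_gaussian (n : ℕ) :
    Integrable (fun x : ℝ => x ^ n) (gaussianReal 0 1) := by
  rw [gaussianReal_of_var_ne_zero 0 one_ne_zero,
    integrable_withDensity_iff (measurable_gaussianPDF 0 1)
      (ae_of_all _ fun x => ENNReal.ofReal_lt_top)]
  have hpdf : ∀ x : ℝ, (gaussianPDF 0 1 x).toReal = gaussianPDFReal 0 1 x := fun x =>
    ENNReal.toReal_ofReal (gaussianPDFReal_nonneg 0 1 x)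
  have heq : (fun x : ℝ => x ^ n * (gaussianPDF 0 1 x).toReal)
      = fun x : ℝ => (Real.sqrt (2 * π))⁻¹ * (x ^ n * Real.exp (-(1/2) * x ^ 2)) := by
    funext x
    rw [hpdf, gaussianPDFReal]
    push_cast
    ring_nf
  rw [heq]
  exact (integrable_pow_mul_exp_neg_mul_sq' (by norm_num) n).const_mul _

end AnticausalAux

namespace AnticausalAux

noncomputable def P : Measure (ℝ × ℝ) := (gaussianReal 0 1).prod (gaussianReal 0 1)

instance : IsProbabilityMeasure P := by unfold P; infer_instance

lemma map_fst : P.map Prod.fst = gaussianReal 0 1 := by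
  simp [P]

lemma map_snd : P.map Prod.snd = gaussianReal 0 1 := by
  simp [P]

lemma indep_fst_snd : IndepFun (Prod.fst : ℝ × ℝ → ℝ) Prod.snd P := by
  rw [indepFun_iff_map_prod_eq_prod_map_map measurable_fst.aemeasurable
    measurable_snd.aemeasurable, map_fst, map_snd]
  have : (fun ω : ℝ × ℝ => (ω.1, ω.2)) = id := rfl
  rw [this, Measure.map_id]
  rfl

lemma gauss_map_neg : (gaussianReal 0 1).map (fun x => -x) = gaussianReal 0 1 := by
  have h := gaussianReal_map_const_mul (μ := 0) (v := 1) (-1)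
  simp only [neg_one_mul, mul_zero] at h
  convert h using 2
  norm_num

noncomputable def T : ℝ × ℝ → ℝ × ℝ := fun p => (-p.1, p.2)

lemma measurable_T : Measurable T := (measurable_fst.neg).prodMk measurable_snd

lemma map_T : P.map T = P := by
  have : T = Prod.map (fun x : ℝ => -x) id := rfl
  rw [this, P, ← Measure.map_prod_map (f := fun x : ℝ => -x) (g := id) _ _ measurable_neg
    measurable_id, gauss_map_neg, Measure.map_id]

end AnticausalAux

namespace AnticausalAux

noncomputable def Z : ℝ × ℝ → ℝ := fun p => p.1 ^ 2 + p.2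

lemma measurable_Z : Measurable Z := (measurable_fst.pow_const 2).add measurable_snd

lemma Z_comp_T : Z ∘ T = Z := by
  funext p
  simp [Z, T]

noncomputable def m : MeasurableSpace (ℝ × ℝ) := MeasurableSpace.comap Z inferInstance

lemma hm : m ≤ (inferInstance : MeasurableSpace (ℝ × ℝ)) := measurable_Z.comap_le

lemma T_preimage {s : Set (ℝ × ℝ)} (hs : MeasurableSet[m] s) : T ⁻¹' s = s := by
  obtain ⟨t, -, rfl⟩ := hs
  rw [← Set.preimage_comp, Z_comp_T]

lemma integrable_X : Integrable (fun p : ℝ × ℝ => p.1) P := by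
  have h1 : Integrable (fun x : ℝ => x ^ 1) (gaussianReal 0 1) := integrable_pow_gaussian 1
  simp only [pow_one] at h1
  have := (integrable_map_measure (f := (Prod.fst : ℝ × ℝ → ℝ)) (g := fun x : ℝ => x)
    aestronglyMeasurable_id measurable_fst.aemeasurable).mp (by rwa [map_fst])
  simpa [Function.comp_def] using this

lemma setIntegral_X_zero {s : Set (ℝ × ℝ)} (hs : MeasurableSet[m] s) :
    ∫ p in s, p.1 ∂P = 0 := by
  have hs' : MeasurableSet s := hm s hs
  have hres : (P.restrict s).map T = P.restrict s := by
    rw [← T_preimage hs, ← Measure.restrict_map measurable_T hs', map_T, T_preimage hs]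
  have hint : ∫ p in s, p.1 ∂P = ∫ p in s, (T p).1 ∂P := by
    conv_lhs => rw [← hres]
    rw [integral_map measurable_T.aemeasurable]
    exact measurable_fst.aestronglyMeasurable
  have : ∫ p in s, (T p).1 ∂P = - ∫ p in s, p.1 ∂P := by
    simp only [T]
    rw [integral_neg]
  linarith [hint, this]

lemma condexp_X_zero :
    P[(fun p : ℝ × ℝ => p.1) | m] =ᵐ[P] fun _ => (0 : ℝ) := by
  refine (ae_eq_condExp_of_forall_setIntegral_eq hm integrable_X
    (fun s _ _ => (integrable_zero _ _ _).integrableOn)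
    (fun s hs _ => by simpa using (setIntegral_X_zero hs).symm)
    (stronglyMeasurable_const.aestronglyMeasurable)).symm

end AnticausalAux

namespace AnticausalAux

lemma integrable_fst_pow (n : ℕ) : Integrable (fun p : ℝ × ℝ => p.1 ^ n) P := by
  have h1 : Integrable (fun x : ℝ => x ^ n) (gaussianReal 0 1) := integrable_pow_gaussian n
  have := (integrable_map_measure (f := (Prod.fst : ℝ × ℝ → ℝ)) (g := fun x : ℝ => x ^ n)
    (measurable_id.pow_const n).aestronglyMeasurable measurable_fst.aemeasurable).mp
    (by rwa [map_fst])
  simpa [Function.comp_def] using this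

lemma integrable_snd : Integrable (fun p : ℝ × ℝ => p.2) P := by
  have h1 : Integrable (fun x : ℝ => x ^ 1) (gaussianReal 0 1) := integrable_pow_gaussian 1
  simp only [pow_one] at h1
  have := (integrable_map_measure (f := (Prod.snd : ℝ × ℝ → ℝ)) (g := fun x : ℝ => x)
    aestronglyMeasurable_id measurable_snd.aemeasurable).mp (by rwa [map_snd])
  simpa [Function.comp_def] using this

lemma gaussian_sq_ne_const (a : ℝ) : ¬ (∀ᵐ p ∂P, p.1 ^ 2 = a) := by
  intro h
  set s : Set (ℝ × ℝ) := Prod.fst ⁻¹' {x : ℝ | x ^ 2 = a} with hs_def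
  have hms : MeasurableSet ({x : ℝ | x ^ 2 = a}) :=
    (measurable_id.pow_const 2) (measurableSet_singleton a)
  have hs_meas : MeasurableSet s := measurable_fst hms
  -- P s = 1 from the a.e. statement
  have hsc : P sᶜ = 0 := by
    have h2 := ae_iff.mp h
    simpa [hs_def, Set.preimage_setOf_eq, Set.compl_setOf] using h2
  -- but also P s = 0 since the gaussian has no atoms
  have hsub : {x : ℝ | x ^ 2 = a} ⊆ {Real.sqrt a, -Real.sqrt a} := by
    intro x hx
    have hx' : x ^ 2 = a := hx
    have ha : 0 ≤ a := hx' ▸ sq_nonneg x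
    have : |x| = Real.sqrt a := by
      rw [← Real.sqrt_sq_eq_abs, hx']
    rcases abs_eq (Real.sqrt_nonneg a) |>.mp this with h1 | h1
    · exact Or.inl h1
    · exact Or.inr h1
  have hγ : (gaussianReal 0 1) {x : ℝ | x ^ 2 = a} = 0 := by
    refine measure_mono_null hsub ?_
    refine gaussianReal_absolutelyContinuous 0 one_ne_zero ?_
    exact Set.Countable.measure_zero ((Set.countable_singleton _).insert _) _
  have hs0 : P s = 0 := by
    rw [hs_def, ← Measure.map_apply measurable_fst hms, map_fst]
    exact hγ
  have : (1 : ENNReal) ≤ P s + P sᶜ := by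
    rw [← measure_univ (μ := P), ← Set.union_compl_self s]
    exact measure_union_le _ _
  rw [hs0, hsc] at this
  simp at this

lemma not_indep : ¬ IndepFun (fun p : ℝ × ℝ => p.1) Z P := by
  intro h
  have hX2Z : IndepFun (fun p : ℝ × ℝ => p.1 ^ 2) Z P :=
    h.comp (measurable_id.pow_const 2) measurable_id
  have hX2E : IndepFun (fun p : ℝ × ℝ => p.1 ^ 2) (fun p : ℝ × ℝ => p.2) P :=
    indep_fst_snd.comp (measurable_id.pow_const 2) measurable_id
  have hi2 := integrable_fst_pow 2
  have hi4 := integrable_fst_pow 4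
  have hiE := integrable_snd
  have hiZ : Integrable Z P := hi2.add hiE
  have hi2E : Integrable ((fun p : ℝ × ℝ => p.1 ^ 2) * fun p : ℝ × ℝ => p.2) P :=
    hX2E.integrable_mul hi2 hiE
  set a := ∫ p, p.1 ^ 2 ∂P with ha
  set b := ∫ p, p.2 ∂P with hb
  set c := ∫ p, p.1 ^ 4 ∂P with hc
  have key : ∫ p, ((fun p : ℝ × ℝ => p.1 ^ 2) * Z) p ∂P = a * ∫ p, Z p ∂P :=
    hX2Z.integral_mul_eq_mul_integral hi2.aestronglyMeasurable hiZ.aestronglyMeasurable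
  have hZint : ∫ p, Z p ∂P = a + b := integral_add hi2 hiE
  have hX2Emul : ∫ p, ((fun p : ℝ × ℝ => p.1 ^ 2) * fun p : ℝ × ℝ => p.2) p ∂P = a * b :=
    hX2E.integral_mul_eq_mul_integral hi2.aestronglyMeasurable hiE.aestronglyMeasurable
  have hsplit : ∫ p, ((fun p : ℝ × ℝ => p.1 ^ 2) * Z) p ∂P
      = c + ∫ p, ((fun p : ℝ × ℝ => p.1 ^ 2) * fun p : ℝ × ℝ => p.2) p ∂P := by
    rw [← integral_add hi4 hi2E]
    congr 1
    funext p
    simp only [Pi.mul_apply, Z]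
    ring
  have hc_eq : c = a ^ 2 := by
    rw [hsplit, hX2Emul, hZint] at key
    nlinarith [key]
  -- variance of X² is zero
  have hvar : ∫ p, (p.1 ^ 2 - a) ^ 2 ∂P = 0 := by
    have hexp : (fun p : ℝ × ℝ => (p.1 ^ 2 - a) ^ 2)
        = fun p : ℝ × ℝ => p.1 ^ 4 - 2 * a * p.1 ^ 2 + a ^ 2 := by
      funext p; ring
    have h1 : Integrable (fun p : ℝ × ℝ => p.1 ^ 4 - 2 * a * p.1 ^ 2) P :=
      hi4.sub (hi2.const_mul (2 * a))
    have h2 : Integrable (fun p : ℝ × ℝ => 2 * a * p.1 ^ 2) P := hi2.const_mul (2 * a)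
    rw [hexp, integral_add h1 (integrable_const _),
      integral_sub hi4 h2, integral_const_mul _ _, integral_const]
    simp only [measure_univ, probReal_univ, ENNReal.toReal_one, smul_eq_mul, one_mul, ← ha, ← hc]
    rw [hc_eq]; ring
  have hnn : Integrable (fun p : ℝ × ℝ => (p.1 ^ 2 - a) ^ 2) P := by
    have hexp : (fun p : ℝ × ℝ => (p.1 ^ 2 - a) ^ 2)
        = fun p : ℝ × ℝ => p.1 ^ 4 - 2 * a * p.1 ^ 2 + a ^ 2 := by
      funext p; ring
    rw [hexp]
    exact (hi4.sub (hi2.const_mul (2 * a))).add (integrable_const _)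
  have hae := (integral_eq_zero_iff_of_nonneg (fun p => sq_nonneg _) hnn).mp hvar
  have hconst : ∀ᵐ p ∂P, p.1 ^ 2 = a := by
    filter_upwards [hae] with p hp
    have : (p.1 ^ 2 - a) ^ 2 = 0 := hp
    have := pow_eq_zero_iff (n := 2) (by norm_num) |>.mp this
    linarith [this]
  exact gaussian_sq_ne_const a hconst

end AnticausalAux

open AnticausalAux

/-- Regression in the anticausal direction generally fails to remove
dependence: there exist a probability space, independent standard normal `X` and `E`, and
a nonconstant measurable `f` (e.g. `f x = x²`) such that, with `Z = f(X) + E`, the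
residual `r_X = X − E[X | Z]` is not independent of `Z`. -/
theorem anticausal_residual_not_independent :
    ∃ (Ω : Type) (_ : MeasurableSpace Ω) (P : Measure Ω) (_ : IsProbabilityMeasure P)
      (X E : Ω → ℝ) (f : ℝ → ℝ),
      Measurable X ∧ Measurable E ∧
      P.map X = gaussianReal 0 1 ∧ P.map E = gaussianReal 0 1 ∧
      IndepFun X E P ∧
      Measurable f ∧ (¬ ∃ c : ℝ, ∀ x, f x = c) ∧ (∀ x, f x = x ^ 2) ∧
      ¬ IndepFun
        (fun ω => X ω -
          (P[X | MeasurableSpace.comap (fun ω' => f (X ω') + E ω') inferInstance]) ω)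
        (fun ω => f (X ω) + E ω) P := by
  refine ⟨ℝ × ℝ, inferInstance, AnticausalAux.P, inferInstance, Prod.fst, Prod.snd,
    fun x => x ^ 2, measurable_fst, measurable_snd, map_fst, map_snd, indep_fst_snd,
    measurable_id.pow_const 2, ?_, fun x => rfl, ?_⟩
  · rintro ⟨c, hc⟩
    have h0 := hc 0
    have h1 := hc 1
    norm_num at h0 h1
    exact absurd (h0 ▸ h1) one_ne_zero
  · intro h
    have hres : (fun ω : ℝ × ℝ => Prod.fst ω -
        (AnticausalAux.P[Prod.fst | MeasurableSpace.comap
          (fun ω' : ℝ × ℝ => (fun x : ℝ => x ^ 2) (Prod.fst ω') + Prod.snd ω')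
          inferInstance]) ω) =ᵐ[AnticausalAux.P] fun ω : ℝ × ℝ => ω.1 := by
      filter_upwards [condexp_X_zero] with p hp
      have hp' : (AnticausalAux.P[Prod.fst | MeasurableSpace.comap
          (fun ω' : ℝ × ℝ => (fun x : ℝ => x ^ 2) (Prod.fst ω') + Prod.snd ω')
          inferInstance]) p = 0 := hp
      simp [hp']
    have hZ : (fun ω : ℝ × ℝ => (fun x : ℝ => x ^ 2) (Prod.fst ω) + Prod.snd ω)
        =ᵐ[AnticausalAux.P] Z := ae_of_all _ fun p => rfl
    exact not_indep (h.congr hres hZ)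
end
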